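/- Let B be a commutative ring and m an ideal of B with m^n = 0. Suppose there exist elements m, m₁, …, m_{n−2} ∈ m with m·m₁⋯m_{n−2} ≠ 0. Let z be the 2×2 upper unitriangular matrix with top-right entry m, and for 1 ≤ i ≤ n−2 let y_i = diag(1 + m_i, 1). Then the iterated commutator [y₁, [y₂, [⋯, [y_{n−2}, z]⋯]]] equals the upper unitriangular matrix with top-right entry m·m₁⋯m_{n−2}, and in particular is not the identity. -/

import Mathlib

open scoped commutatorElement

private lemma comm_val {B : Type*} [CommRing B]
    (y w : (Matrix (Fin 2) (Fin 2) B)ˣ) (c a : B)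
    (hy : (y : Matrix (Fin 2) (Fin 2) B) = !![1 + c, 0; 0, 1])
    (hw : (w : Matrix (Fin 2) (Fin 2) B) = !![1, a; 0, 1]) :
    ((⁅y, w⁆ : (Matrix (Fin 2) (Fin 2) B)ˣ) : Matrix (Fin 2) (Fin 2) B)
      = !![1, c * a; 0, 1] := by
  have h1 : ⁅y, w⁆ = (y * w) * (w * y)⁻¹ := by group
  have h2 : (!![1, c * a; 0, 1] : Matrix (Fin 2) (Fin 2) B) *
      ((w * y : (Matrix (Fin 2) (Fin 2) B)ˣ) : Matrix (Fin 2) (Fin 2) B)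
      = ((y * w : (Matrix (Fin 2) (Fin 2) B)ˣ) : Matrix (Fin 2) (Fin 2) B) := by
    simp only [Units.val_mul, hy, hw]
    ext i j
    fin_cases i <;> fin_cases j <;> simp [Matrix.mul_apply, Fin.sum_univ_two] <;> ring
  calc ((⁅y, w⁆ : (Matrix (Fin 2) (Fin 2) B)ˣ) : Matrix (Fin 2) (Fin 2) B)
      = ((y * w : (Matrix (Fin 2) (Fin 2) B)ˣ) : Matrix (Fin 2) (Fin 2) B) *
        (((w * y)⁻¹ : (Matrix (Fin 2) (Fin 2) B)ˣ) : Matrix (Fin 2) (Fin 2) B) := by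
        rw [h1, Units.val_mul]
    _ = !![1, c * a; 0, 1] * (((w * y) * (w * y)⁻¹ : (Matrix (Fin 2) (Fin 2) B)ˣ) :
          Matrix (Fin 2) (Fin 2) B) := by simp [Units.val_mul, ← h2, Matrix.mul_assoc]
    _ = !![1, c * a; 0, 1] := by rw [mul_inv_cancel]; simp

private lemma fold_val {B : Type*} [CommRing B] (k : ℕ) (ms : Fin k → B)
    (ys : Fin k → (Matrix (Fin 2) (Fin 2) B)ˣ)
    (hys : ∀ i, (ys i : Matrix (Fin 2) (Fin 2) B) = !![1 + ms i, 0; 0, 1])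
    (a : B) (w : (Matrix (Fin 2) (Fin 2) B)ˣ)
    (hw : (w : Matrix (Fin 2) (Fin 2) B) = !![1, a; 0, 1]) :
    ((Fin.foldr k (fun i v => ⁅ys i, v⁆) w : (Matrix (Fin 2) (Fin 2) B)ˣ) :
      Matrix (Fin 2) (Fin 2) B) = !![1, (∏ i, ms i) * a; 0, 1] := by
  induction k generalizing a w with
  | zero => simpa using hw
  | succ k ih =>
    rw [Fin.foldr_succ]
    have hinner := ih (fun i => ms i.succ) (fun i => ys i.succ)
      (fun i => hys i.succ) a w hw
    rw [comm_val (ys 0) _ (ms 0) ((∏ i : Fin k, ms i.succ) * a) (hys 0) hinner]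
    congr 1
    rw [Fin.prod_univ_succ]
    ring

/-- Explicit iterated commutator of unitriangular and diagonal congruence elements:
`[y₁,[y₂,[…,[y_{n-2}, z]…]]]` is unitriangular with top-right entry `m·m₁⋯m_{n-2}`. -/
theorem stmt5 (B : Type*) [CommRing B] (J : Ideal B) (n : ℕ) (hn : 2 ≤ n)
    (hJ : J ^ n = ⊥)
    (m : B) (hm : m ∈ J) (ms : Fin (n - 2) → B) (hms : ∀ i, ms i ∈ J)
    (hne : m * ∏ i, ms i ≠ 0)
    (z : (Matrix (Fin 2) (Fin 2) B)ˣ)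
    (hz : (z : Matrix (Fin 2) (Fin 2) B) = !![1, m; 0, 1])
    (ys : Fin (n - 2) → (Matrix (Fin 2) (Fin 2) B)ˣ)
    (hys : ∀ i, (ys i : Matrix (Fin 2) (Fin 2) B) = !![1 + ms i, 0; 0, 1]) :
    ((Fin.foldr (n - 2) (fun i w => ⁅ys i, w⁆) z : (Matrix (Fin 2) (Fin 2) B)ˣ) :
        Matrix (Fin 2) (Fin 2) B) = !![1, m * ∏ i, ms i; 0, 1] ∧
      Fin.foldr (n - 2) (fun i w => ⁅ys i, w⁆) z ≠ 1 := by
  have hval := fold_val (n - 2) ms ys hys m z hz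
  have hcomm : (∏ i, ms i) * m = m * ∏ i, ms i := mul_comm _ _
  rw [hcomm] at hval
  refine ⟨hval, ?_⟩
  intro h1
  rw [h1] at hval
  have := congrFun (congrFun hval.symm 0) 1
  simp [Matrix.one_apply] at this
  exact hne this
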